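/- Under the hypotheses of the discrete multi-symplectic conservation law (z : ℤ × {0,1} → ℝ⁴ satisfying the fully discrete scheme with parameters δt, δx > 0, a ∈ ℝ, σ ∈ ℕ, and ξ, η : ℤ × {0,1} → ℝ⁴ two solutions of the corresponding linearized scheme), assume moreover that ξ and η have finite support in the spatial index, i.e. there exists J ∈ ℕ such that ξ_j^m = 0 and η_j^m = 0 for all |j| ≥ J and m ∈ {0,1}. Then the global discrete symplectic form is preserved: Σ_{j∈ℤ} ( ⟨ξ_j^1, M⁺ η_j^1⟩ − ⟨η_j^1, M⁺ ξ_j^1⟩ ) = Σ_{j∈ℤ} ( ⟨ξ_j^0, M⁺ η_j^0⟩ − ⟨η_j^0, M⁺ ξ_j^0⟩ ) (discrete analogue of the symplecticity of the mid-point scheme, Proposition 3.1, obtained by summing the discrete multi-symplectic conservation law over the spatial grid). -/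

import Mathlib

open scoped BigOperators Matrix

noncomputable section

/-- Euclidean inner product on `ℝ⁴`. -/
def dot4 (x y : Fin 4 → ℝ) : ℝ := ∑ i, x i * y i

/-- The matrix `M`. -/
def Mmat : Matrix (Fin 4) (Fin 4) ℝ :=
  !![0, -1, 0, 0; 1, 0, 0, 0; 0, 0, 0, 0; 0, 0, 0, 0]

/-- The matrix `K⁺`. -/
def Kp : Matrix (Fin 4) (Fin 4) ℝ :=
  !![0, 0, 1, 0; 0, 0, 0, 1; 0, 0, 0, 0; 0, 0, 0, 0]

/-- The matrix `K⁻`. -/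
def Km : Matrix (Fin 4) (Fin 4) ℝ :=
  !![0, 0, 0, 0; 0, 0, 0, 0; -1, 0, 0, 0; 0, -1, 0, 0]

/-- The matrix `M⁺`. -/
def Mp : Matrix (Fin 4) (Fin 4) ℝ :=
  !![0, -1, 0, 0; 0, 0, 0, 0; 0, 0, 0, 0; 0, 0, 0, 0]

/-- `S₁(p,q,v,w) = −(p²+q²)^{σ+1}/(2σ+2)`. -/
def S1 (σ : ℕ) (z : Fin 4 → ℝ) : ℝ :=
  -(z 0 ^ 2 + z 1 ^ 2) ^ (σ + 1) / (2 * (σ : ℝ) + 2)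

/-- `S₂(p,q,v,w) = −(v²+w²)/2`. -/
def S2 (z : Fin 4 → ℝ) : ℝ := -(z 2 ^ 2 + z 3 ^ 2) / 2

/-- The gradient of `f : ℝ⁴ → ℝ`: the vector of partial derivatives. -/
def grad4 (f : (Fin 4 → ℝ) → ℝ) (z : Fin 4 → ℝ) : Fin 4 → ℝ :=
  fun i => fderiv ℝ f z (Pi.single i 1)

/-- The Hessian of `f : ℝ⁴ → ℝ` at `z` applied to a vector `ζ`. -/
def hess4 (f : (Fin 4 → ℝ) → ℝ) (z ζ : Fin 4 → ℝ) : Fin 4 → ℝ :=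
  fderiv ℝ (grad4 f) z ζ

/-- Mid-point (in time) value of a grid function `ℤ × {0,1} → ℝ⁴`. -/
def half (z : ℤ → Fin 2 → Fin 4 → ℝ) (j : ℤ) : Fin 4 → ℝ :=
  (2 : ℝ)⁻¹ • (z j 0 + z j 1)

/-- The fully discrete (centered difference in space, mid-point in time) scheme. -/
def DiscreteScheme (σ : ℕ) (δt δx a : ℝ) (z : ℤ → Fin 2 → Fin 4 → ℝ) : Prop :=
  ∀ j : ℤ,
    δt⁻¹ • Mmat.mulVec (z j 1 - z j 0)
      + (a * δx⁻¹) • Kp.mulVec (half z j - half z (j - 1))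
      + (a * δx⁻¹) • Km.mulVec (half z (j + 1) - half z j)
    = grad4 (S1 σ) (half z j) + a • grad4 S2 (half z j)

/-- The linearization of the fully discrete scheme along `z`. -/
def LinearizedScheme (σ : ℕ) (δt δx a : ℝ) (z ζ : ℤ → Fin 2 → Fin 4 → ℝ) : Prop :=
  ∀ j : ℤ,
    δt⁻¹ • Mmat.mulVec (ζ j 1 - ζ j 0)
      + (a * δx⁻¹) • Kp.mulVec (half ζ j - half ζ (j - 1))
      + (a * δx⁻¹) • Km.mulVec (half ζ (j + 1) - half ζ j)
    = hess4 (S1 σ) (half z j) (half ζ j) + a • hess4 S2 (half z j) (half ζ j)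

/-- Discrete symplectic density `ω_j^m = ⟨ξ_j^m, M⁺ η_j^m⟩ − ⟨η_j^m, M⁺ ξ_j^m⟩`. -/
def omegaD (ξ η : ℤ → Fin 2 → Fin 4 → ℝ) (j : ℤ) (m : Fin 2) : ℝ :=
  dot4 (ξ j m) (Mp.mulVec (η j m)) - dot4 (η j m) (Mp.mulVec (ξ j m))

/-- Discrete symplectic flux `κ_j = ⟨ξ_{j−1}^{1/2}, K⁻ η_j^{1/2}⟩ − ⟨η_{j−1}^{1/2}, K⁻ ξ_j^{1/2}⟩`. -/
def kappaD (ξ η : ℤ → Fin 2 → Fin 4 → ℝ) (j : ℤ) : ℝ :=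
  dot4 (half ξ (j - 1)) (Km.mulVec (half η j)) - dot4 (half η (j - 1)) (Km.mulVec (half ξ j))


lemma aux_contDiff_S1 (σ : ℕ) : ContDiff ℝ 2 (S1 σ) := by
  unfold S1
  fun_prop (disch := intros; positivity)

lemma aux_contDiff_S2 : ContDiff ℝ 2 S2 := by
  unfold S2
  fun_prop (disch := norm_num)

lemma aux_hess4_symm (f : (Fin 4 → ℝ) → ℝ) (hf : ContDiff ℝ 2 f) (z u v : Fin 4 → ℝ) :
    dot4 u (hess4 f z v) = dot4 v (hess4 f z u) := by
  have hdf : Differentiable ℝ f := hf.differentiable two_ne_zero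
  have hdf2 : Differentiable ℝ (fderiv ℝ f) :=
    (hf.fderiv_right (m := 1) le_rfl).differentiable one_ne_zero
  set D2 := fderiv ℝ (fderiv ℝ f) z with hD2
  have hsymm : ∀ v w, D2 v w = D2 w v :=
    second_derivative_symmetric (fun y => (hdf y).hasFDerivAt) (hdf2 z).hasFDerivAt
  set φ : ((Fin 4 → ℝ) →L[ℝ] ℝ) →L[ℝ] (Fin 4 → ℝ) :=
    ContinuousLinearMap.pi (fun i => ContinuousLinearMap.apply ℝ ℝ (Pi.single i 1)) with hφ
  have hgrad : grad4 f = fun y => φ (fderiv ℝ f y) := rfl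
  have hh : ∀ w, hess4 f z w = φ (D2 w) := by
    intro w
    have hcomp : fderiv ℝ (grad4 f) z = φ.comp (fderiv ℝ (fderiv ℝ f) z) := by
      rw [hgrad]
      exact (φ.hasFDerivAt.comp z (hdf2 z).hasFDerivAt).fderiv
    simp [hess4, hcomp, hD2]
  have happ : ∀ w i, hess4 f z w i = D2 w (Pi.single i 1) := by
    intro w i; rw [hh]; rfl
  have key : ∀ u w, dot4 u (hess4 f z w) = D2 w u := by
    intro u w
    have hu : u = ∑ i, (u i) • (Pi.single i (1:ℝ) : Fin 4 → ℝ) := by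
      refine (Finset.univ_sum_single u).symm.trans ?_
      refine Finset.sum_congr rfl fun i _ => ?_
      rw [← Pi.single_smul, smul_eq_mul, mul_one]
    calc dot4 u (hess4 f z w) = ∑ i, u i * D2 w (Pi.single i 1) := by
          simp [dot4, happ]
      _ = D2 w u := by
          conv_rhs => rw [hu]
          rw [map_sum]
          simp [smul_eq_mul]
  rw [key, key, hsymm]

lemma aux_dot4_Mmat (u x : Fin 4 → ℝ) : dot4 u (Mmat.mulVec x) = -(u 0 * x 1) + u 1 * x 0 := by
  simp [dot4, Mmat, Matrix.mulVec, dotProduct, Fin.sum_univ_four, Matrix.vecHead,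
    Matrix.vecTail, Function.comp]
  try ring

lemma aux_dot4_Kp (u x : Fin 4 → ℝ) : dot4 u (Kp.mulVec x) = u 0 * x 2 + u 1 * x 3 := by
  simp [dot4, Kp, Matrix.mulVec, dotProduct, Fin.sum_univ_four, Matrix.vecHead,
    Matrix.vecTail, Function.comp]

lemma aux_dot4_Km (u x : Fin 4 → ℝ) : dot4 u (Km.mulVec x) = -(u 2 * x 0) - u 3 * x 1 := by
  simp [dot4, Km, Matrix.mulVec, dotProduct, Fin.sum_univ_four, Matrix.vecHead,
    Matrix.vecTail, Function.comp]
  try ring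

lemma aux_dot4_Mp (u x : Fin 4 → ℝ) : dot4 u (Mp.mulVec x) = -(u 0 * x 1) := by
  simp [dot4, Mp, Matrix.mulVec, dotProduct, Fin.sum_univ_four, Matrix.vecHead,
    Matrix.vecTail, Function.comp]

lemma aux_dot4_add_right (u x y : Fin 4 → ℝ) : dot4 u (x + y) = dot4 u x + dot4 u y := by
  simp [dot4, Fin.sum_univ_four]; ring

lemma aux_dot4_sub_right (u x y : Fin 4 → ℝ) : dot4 u (x - y) = dot4 u x - dot4 u y := by
  simp [dot4, Fin.sum_univ_four]; ring

lemma aux_dot4_smul_right (c : ℝ) (u x : Fin 4 → ℝ) : dot4 u (c • x) = c * dot4 u x := by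
  simp [dot4, Fin.sum_univ_four]; ring

lemma aux_alg (δt δx a : ℝ) (ξ η : ℤ → Fin 2 → Fin 4 → ℝ) (j : ℤ) :
    δt⁻¹ * (omegaD ξ η j 1 - omegaD ξ η j 0)
      + (a * δx⁻¹) * (kappaD ξ η (j + 1) - kappaD ξ η j)
    = dot4 (half ξ j) (δt⁻¹ • Mmat.mulVec (η j 1 - η j 0)
        + (a * δx⁻¹) • Kp.mulVec (half η j - half η (j - 1))
        + (a * δx⁻¹) • Km.mulVec (half η (j + 1) - half η j))
      - dot4 (half η j) (δt⁻¹ • Mmat.mulVec (ξ j 1 - ξ j 0)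
        + (a * δx⁻¹) • Kp.mulVec (half ξ j - half ξ (j - 1))
        + (a * δx⁻¹) • Km.mulVec (half ξ (j + 1) - half ξ j)) := by
  simp only [aux_dot4_add_right, aux_dot4_smul_right, Matrix.mulVec_sub, aux_dot4_sub_right,
    aux_dot4_Mmat, aux_dot4_Kp, aux_dot4_Km, aux_dot4_Mp, omegaD, kappaD,
    add_sub_cancel_right, Pi.sub_apply]
  simp only [half, Pi.smul_apply, Pi.add_apply, smul_eq_mul]
  ring

lemma aux_local (σ : ℕ) (δt δx a : ℝ) (z ξ η : ℤ → Fin 2 → Fin 4 → ℝ)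
    (hξ : LinearizedScheme σ δt δx a z ξ) (hη : LinearizedScheme σ δt δx a z η) (j : ℤ) :
    δt⁻¹ * (omegaD ξ η j 1 - omegaD ξ η j 0)
      + (a * δx⁻¹) * (kappaD ξ η (j + 1) - kappaD ξ η j) = 0 := by
  have e1 := congrArg (dot4 (half η j)) (hξ j)
  have e2 := congrArg (dot4 (half ξ j)) (hη j)
  have hs1 := aux_hess4_symm (S1 σ) (aux_contDiff_S1 σ) (half z j) (half ξ j) (half η j)
  have hs2 := aux_hess4_symm S2 aux_contDiff_S2 (half z j) (half ξ j) (half η j)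
  rw [aux_alg, e1, e2]
  simp only [aux_dot4_add_right, aux_dot4_smul_right]
  rw [hs1, hs2]
  ring

/-- summing the discrete multi-symplectic conservation law over the spatial
grid: for spatially finitely supported solutions `ξ, η` of the linearized scheme, the
global discrete symplectic form `Σ_j (⟨ξ_j^m, M⁺η_j^m⟩ − ⟨η_j^m, M⁺ξ_j^m⟩)` is the same
at time levels `m = 0` and `m = 1`. -/
theorem stmt_15 (σ : ℕ) (δt δx a : ℝ) (hδt : 0 < δt) (hδx : 0 < δx)
    (z ξ η : ℤ → Fin 2 → Fin 4 → ℝ)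
    (hz : DiscreteScheme σ δt δx a z)
    (hξ : LinearizedScheme σ δt δx a z ξ)
    (hη : LinearizedScheme σ δt δx a z η)
    (J : ℕ) (hsupp : ∀ (j : ℤ) (m : Fin 2), (J : ℤ) ≤ |j| → ξ j m = 0 ∧ η j m = 0) :
    ∑' j : ℤ, omegaD ξ η j 1 = ∑' j : ℤ, omegaD ξ η j 0 := by
  classical
  have hωz : ∀ (jj : ℤ) (m : Fin 2), jj ∉ Finset.Icc (-(J:ℤ)) (J:ℤ) → omegaD ξ η jj m = 0 := by
    intro jj m hjj
    have habs : (J:ℤ) ≤ |jj| := by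
      simp only [Finset.mem_Icc, not_and_or, not_le] at hjj
      rw [le_abs]
      omega
    have h := hsupp jj m habs
    simp [omegaD, h.1, h.2, dot4]
  have hκz : ∀ jj : ℤ, (J:ℤ) ≤ |jj - 1| → kappaD ξ η jj = 0 := by
    intro jj h
    have h0 := hsupp (jj - 1) 0 h
    have h1 := hsupp (jj - 1) 1 h
    have hhξ : half ξ (jj - 1) = 0 := by simp [half, h0.1, h1.1]
    have hhη : half η (jj - 1) = 0 := by simp [half, h0.2, h1.2]
    simp [kappaD, hhξ, hhη, dot4]
  rw [tsum_eq_sum (s := Finset.Icc (-(J:ℤ)) (J:ℤ)) (fun jj h => hωz jj 1 h),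
      tsum_eq_sum (s := Finset.Icc (-(J:ℤ)) (J:ℤ)) (fun jj h => hωz jj 0 h)]
  rw [← sub_eq_zero, ← Finset.sum_sub_distrib]
  have hstep : ∀ jj : ℤ, omegaD ξ η jj 1 - omegaD ξ η jj 0
      = (-(δt * (a * δx⁻¹))) * (kappaD ξ η (jj + 1) - kappaD ξ η jj) := by
    intro jj
    have h := aux_local σ δt δx a z ξ η hξ hη jj
    have hδ : δt ≠ 0 := ne_of_gt hδt
    have h2 : δt⁻¹ * (omegaD ξ η jj 1 - omegaD ξ η jj 0)
        = -((a * δx⁻¹) * (kappaD ξ η (jj + 1) - kappaD ξ η jj)) := by linarith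
    calc omegaD ξ η jj 1 - omegaD ξ η jj 0
        = δt * (δt⁻¹ * (omegaD ξ η jj 1 - omegaD ξ η jj 0)) := by
          field_simp
      _ = (-(δt * (a * δx⁻¹))) * (kappaD ξ η (jj + 1) - kappaD ξ η jj) := by
          rw [h2]; ring
  simp only [hstep]
  rw [← Finset.mul_sum]
  have hshift : ∑ jj ∈ Finset.Icc (-(J:ℤ)) (J:ℤ), kappaD ξ η (jj + 1)
      = ∑ jj ∈ Finset.Icc (-(J:ℤ)) (J:ℤ), kappaD ξ η jj := by
    have h1 : ∑ jj ∈ Finset.Icc (-(J:ℤ)) (J:ℤ), kappaD ξ η (jj + 1)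
        = ∑ jj ∈ Finset.Icc (-(J:ℤ) + 1) ((J:ℤ) + 1), kappaD ξ η jj := by
      rw [← Finset.map_add_right_Icc (-(J:ℤ)) (J:ℤ) 1, Finset.sum_map]
      simp [addRightEmbedding]
    rw [h1]
    have h2 : ∑ jj ∈ Finset.Icc (-(J:ℤ) + 1) ((J:ℤ) + 1), kappaD ξ η jj
        = ∑ jj ∈ Finset.Icc (-(J:ℤ)) ((J:ℤ) + 1), kappaD ξ η jj := by
      apply Finset.sum_subset
      · exact Finset.Icc_subset_Icc (by omega) le_rfl
      · intro x hx hnx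
        apply hκz
        rw [Finset.mem_Icc] at hx
        simp only [Finset.mem_Icc, not_and_or, not_le] at hnx
        rw [le_abs]
        omega
    have h3 : ∑ jj ∈ Finset.Icc (-(J:ℤ)) (J:ℤ), kappaD ξ η jj
        = ∑ jj ∈ Finset.Icc (-(J:ℤ)) ((J:ℤ) + 1), kappaD ξ η jj := by
      apply Finset.sum_subset
      · exact Finset.Icc_subset_Icc le_rfl (by omega)
      · intro x hx hnx
        apply hκz
        rw [Finset.mem_Icc] at hx
        simp only [Finset.mem_Icc, not_and_or, not_le] at hnx
        rw [le_abs]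
        omega
    rw [h2, ← h3]
  rw [Finset.sum_sub_distrib, hshift, sub_self, mul_zero]

end
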